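/- arXiv:2207.08985 — 2 statements merged into one kernel-verified Lean document; each statement's English description precedes it below -/
import Mathlib

section
/- Let β = (βₙ) with inf βₙ = δ > 0 and satisfying the weighted Hardy space conditions. Then H_β possesses no frame of normalized reproducing kernels: there is no sequence {zₙ} ⊂ 𝔻 and constants A, B > 0 such that A‖f‖² ≤ Σₙ |⟨f, K_{zₙ}⟩|²/‖K_{zₙ}‖² ≤ B‖f‖² for all f ∈ H_β. -/
open Complex Filter

-- basic algebraic identity for the Blaschke factor
lemma normSq_blaschke (w lam : ℂ) :
    Complex.normSq (1 - (starRingEnd ℂ) w * lam) - Complex.normSq (w - lam)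
      = (1 - Complex.normSq w) * (1 - Complex.normSq lam) := by
  simp only [Complex.normSq_apply, Complex.sub_re, Complex.sub_im, Complex.mul_re,
    Complex.mul_im, Complex.conj_re, Complex.conj_im, Complex.one_re, Complex.one_im]
  ring

lemma abs_blaschke_le (w lam : ℂ) (hw : ‖w‖ < 1) (hlam : ‖lam‖ < 1) :
    ‖w - lam‖ ≤ ‖1 - (starRingEnd ℂ) w * lam‖ := by
  have h1 : Complex.normSq w < 1 := by
    have := Complex.sq_norm w; nlinarith [norm_nonneg w]
  have h2 : Complex.normSq lam < 1 := by
    have := Complex.sq_norm lam; nlinarith [norm_nonneg lam]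
  have key := normSq_blaschke w lam
  have : Complex.normSq (w - lam) ≤ Complex.normSq (1 - (starRingEnd ℂ) w * lam) := by
    nlinarith
  simpa [Complex.norm_def] using Real.sqrt_le_sqrt this

lemma blaschke_den_ne (w lam : ℂ) (hw : ‖w‖ < 1) (hlam : ‖lam‖ < 1) :
    1 - (starRingEnd ℂ) w * lam ≠ 0 := by
  intro h
  have h1 : ‖(starRingEnd ℂ) w * lam‖ < 1 := by
    rw [norm_mul, Complex.norm_conj]
    nlinarith [norm_nonneg w, norm_nonneg lam]
  have : (1:ℂ) = (starRingEnd ℂ) w * lam := by linear_combination h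
  rw [← this] at h1; simp at h1

lemma succ_mul_pow_le (x : ℝ) (hx0 : 0 ≤ x) (hx1 : x < 1) (m : ℕ) :
    (m + 1 : ℝ) * x ^ m ≤ (1 - x)⁻¹ := by
  have h1 : (m + 1 : ℝ) * x ^ m = ∑ _j ∈ Finset.range (m+1), x ^ m := by
    simp [Finset.sum_const]
  rw [h1]
  calc ∑ _j ∈ Finset.range (m+1), x ^ m
      ≤ ∑ j ∈ Finset.range (m+1), x ^ j := by
        apply Finset.sum_le_sum
        intro j hj
        exact pow_le_pow_of_le_one hx0 hx1.le (by simpa using Nat.lt_succ_iff.mp (Finset.mem_range.mp hj))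
    _ ≤ ∑' j : ℕ, x ^ j := Summable.sum_le_tsum _ (fun j _ => pow_nonneg hx0 j)
        (summable_geometric_of_lt_one hx0 hx1)
    _ = (1 - x)⁻¹ := tsum_geometric_of_lt_one hx0 hx1

lemma normSq_step_identity (w c d : ℂ) :
    Complex.normSq (w * c - d)
      = Complex.normSq (c - (starRingEnd ℂ) w * d)
        + (Complex.normSq w - 1) * (Complex.normSq c - Complex.normSq d) := by
  simp only [Complex.normSq_apply, Complex.sub_re, Complex.sub_im, Complex.mul_re,
    Complex.mul_im, Complex.conj_re, Complex.conj_im]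
  ring

lemma blaschke_step (w : ℂ) (hw : ‖w‖ < 1) (a : ℕ → ℂ) (C r : ℝ)
    (hC : 0 < C) (hr0 : 0 ≤ r) (hr1 : r < 1)
    (ha : ∀ m, ‖a m‖ ≤ C * r ^ m)
    (f : ℂ → ℂ)
    (hf : ∀ lam : ℂ, ‖lam‖ < 1 → HasSum (fun m => a m * lam ^ m) (f lam)) :
    ∃ (g : ℕ → ℂ) (C' r' : ℝ), 0 < C' ∧ 0 ≤ r' ∧ r' < 1 ∧
      (∀ m, ‖g m‖ ≤ C' * r' ^ m) ∧
      (∑' m, ‖g m‖ ^ 2) = (∑' m, ‖a m‖ ^ 2) ∧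
      (∀ lam : ℂ, ‖lam‖ < 1 →
        HasSum (fun m => g m * lam ^ m)
          ((w - lam) / (1 - (starRingEnd ℂ) w * lam) * f lam)) := by
  set R : ℝ := max r (‖w‖) with hRdef
  have hR0 : 0 ≤ R := le_trans hr0 (le_max_left _ _)
  have hR1 : R < 1 := max_lt hr1 hw
  set r' : ℝ := (1 + R) / 2 with hr'def
  have hr'pos : 0 < r' := by positivity
  have hRr' : R < r' := by rw [hr'def]; linarith
  have hr'1 : r' < 1 := by rw [hr'def]; linarith
  set c : ℕ → ℂ := fun m => ∑ j ∈ Finset.range (m+1), a j * ((starRingEnd ℂ) w) ^ (m - j)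
    with hcdef
  set d : ℕ → ℂ := fun m => Nat.casesOn m 0 c with hddef
  have hd0 : d 0 = 0 := rfl
  have hdsucc : ∀ m, d (m + 1) = c m := fun m => rfl
  set g : ℕ → ℂ := fun m => w * c m - d m with hgdef
  -- bound on c
  have hcR : ∀ m, ‖c m‖ ≤ C * (m + 1) * R ^ m := by
    intro m
    calc ‖c m‖ ≤ ∑ j ∈ Finset.range (m+1),
          ‖a j * ((starRingEnd ℂ) w) ^ (m - j)‖ :=
          norm_sum_le _ _
      _ ≤ ∑ j ∈ Finset.range (m+1), C * R ^ m := by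
          apply Finset.sum_le_sum
          intro j hj
          have hj' : j ≤ m := Nat.lt_succ_iff.mp (Finset.mem_range.mp hj)
          rw [norm_mul, norm_pow, Complex.norm_conj]
          have h1 : ‖a j‖ ≤ C * R ^ j :=
            (ha j).trans (by gcongr <;> first | exact hr0 | exact le_max_left _ _)
          have h2 : ‖w‖ ^ (m - j) ≤ R ^ (m - j) :=
            pow_le_pow_left₀ (norm_nonneg w) (le_max_right _ _) _
          calc ‖a j‖ * ‖w‖ ^ (m - j)
              ≤ (C * R ^ j) * R ^ (m - j) :=
                mul_le_mul h1 h2 (pow_nonneg (norm_nonneg w) _) (by positivity)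
            _ = C * R ^ m := by
                rw [mul_assoc, ← pow_add]
                congr 2
                omega
      _ = C * (m + 1) * R ^ m := by
          rw [Finset.sum_const, Finset.card_range]
          push_cast; ring
  -- geometric bound for c
  have hx0 : 0 ≤ R / r' := by positivity
  have hx1 : R / r' < 1 := (div_lt_one hr'pos).mpr hRr'
  set Cc : ℝ := C * (1 - R / r')⁻¹ with hCcdef
  have hCcpos : 0 < Cc := by
    apply mul_pos hC
    rw [inv_pos]; linarith
  have hc : ∀ m, ‖c m‖ ≤ Cc * r' ^ m := by
    intro m
    have h1 := succ_mul_pow_le (R / r') hx0 hx1 m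
    have h2 : ((m:ℝ) + 1) * R ^ m ≤ (1 - R / r')⁻¹ * r' ^ m := by
      have h3 : ((m:ℝ) + 1) * (R / r') ^ m * r' ^ m ≤ (1 - R / r')⁻¹ * r' ^ m := by
        apply mul_le_mul_of_nonneg_right h1 (pow_nonneg hr'pos.le m)
      calc ((m:ℝ) + 1) * R ^ m = ((m:ℝ) + 1) * (R / r') ^ m * r' ^ m := by
            rw [div_pow, mul_assoc, div_mul_cancel₀]
            exact pow_ne_zero _ (ne_of_gt hr'pos)
        _ ≤ _ := h3
    calc ‖c m‖ ≤ C * (m + 1) * R ^ m := hcR m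
      _ = C * (((m:ℝ) + 1) * R ^ m) := by ring
      _ ≤ C * ((1 - R / r')⁻¹ * r' ^ m) := by
          apply mul_le_mul_of_nonneg_left h2 hC.le
      _ = Cc * r' ^ m := by rw [hCcdef]; ring
  have hd : ∀ m, ‖d m‖ ≤ (Cc / r') * r' ^ m := by
    intro m
    cases m with
    | zero => simp [hd0]; positivity
    | succ k =>
        rw [hdsucc]
        calc ‖c k‖ ≤ Cc * r' ^ k := hc k
          _ = (Cc / r') * r' ^ (k + 1) := by
              field_simp
              ring
  have hg : ∀ m, ‖g m‖ ≤ (Cc + Cc / r') * r' ^ m := by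
    intro m
    calc ‖g m‖ ≤ ‖w * c m‖ + ‖d m‖ := by
          exact (norm_sub_le _ _)
      _ ≤ Cc * r' ^ m + (Cc / r') * r' ^ m := by
          apply add_le_add _ (hd m)
          rw [norm_mul]
          calc ‖w‖ * ‖c m‖ ≤ 1 * (Cc * r' ^ m) := by
                apply mul_le_mul hw.le (hc m) (norm_nonneg _) zero_le_one
            _ = Cc * r' ^ m := one_mul _
      _ = (Cc + Cc / r') * r' ^ m := by ring
  -- summability of squares
  have sq_summable : ∀ (u : ℕ → ℂ) (D : ℝ), (∀ m, ‖u m‖ ≤ D * r' ^ m) →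
      Summable (fun m => ‖u m‖ ^ 2) := by
    intro u D hu
    have hD0 : 0 ≤ D := by
      have := (norm_nonneg (u 0)).trans (hu 0)
      simpa using this
    have hsq1 : (0:ℝ) ≤ r' ^ 2 := by positivity
    have hsq2 : r' ^ 2 < 1 := by nlinarith
    apply Summable.of_nonneg_of_le (fun m => by positivity)
      (fun m => ?_) ((summable_geometric_of_lt_one hsq1 hsq2).mul_left (D ^ 2))
    calc ‖u m‖ ^ 2 ≤ (D * r' ^ m) ^ 2 := by
          apply pow_le_pow_left₀ (norm_nonneg _) (hu m)
      _ = D ^ 2 * (r' ^ 2) ^ m := by rw [← pow_mul, mul_pow]; ring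
  have Sc := sq_summable c Cc hc
  have Sd := sq_summable d (Cc / r') hd
  have Sg := sq_summable g (Cc + Cc / r') hg
  have Sa : Summable (fun m => ‖a m‖ ^ 2) := by
    apply sq_summable a C
    intro m
    exact (ha m).trans (by gcongr <;> first | exact hr0 | exact (le_max_left _ _).trans hRr'.le)
  -- recurrence and coefficient identity
  have hrec : ∀ m, c (m + 1) = a (m + 1) + (starRingEnd ℂ) w * c m := by
    intro m
    rw [hcdef]
    simp only []
    rw [Finset.sum_range_succ]
    have : ∀ j ∈ Finset.range (m + 1),
        a j * (starRingEnd ℂ) w ^ (m + 1 - j) = (starRingEnd ℂ) w * (a j * (starRingEnd ℂ) w ^ (m - j)) := by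
      intro j hj
      have hj' : j ≤ m := Nat.lt_succ_iff.mp (Finset.mem_range.mp hj)
      have : m + 1 - j = (m - j) + 1 := by omega
      rw [this, pow_succ]
      ring
    rw [Finset.sum_congr rfl this, ← Finset.mul_sum]
    simp [add_comm]
  have ha_eq : ∀ m, a m = c m - (starRingEnd ℂ) w * d m := by
    intro m
    cases m with
    | zero =>
        rw [hd0]
        simp [hcdef]
    | succ k =>
        rw [hdsucc, hrec k]
        ring
  -- the ℓ² mass identity
  have hsq : ∀ m, ‖g m‖ ^ 2 = ‖a m‖ ^ 2
      + (Complex.normSq w - 1) * (‖c m‖ ^ 2 - ‖d m‖ ^ 2) := by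
    intro m
    rw [Complex.sq_norm, Complex.sq_norm, Complex.sq_norm, Complex.sq_norm]
    rw [hgdef]
    simp only []
    rw [normSq_step_identity w (c m) (d m), ← ha_eq m]
  have hdc_tsum : ∑' m, ‖d m‖ ^ 2 = ∑' m, ‖c m‖ ^ 2 := by
    rw [Summable.tsum_eq_zero_add Sd]
    simp [hd0, hdsucc]
  have hmass : (∑' m, ‖g m‖ ^ 2) = (∑' m, ‖a m‖ ^ 2) := by
    calc (∑' m, ‖g m‖ ^ 2)
        = ∑' m, (‖a m‖ ^ 2
            + (Complex.normSq w - 1) * (‖c m‖ ^ 2 - ‖d m‖ ^ 2)) :=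
          tsum_congr hsq
      _ = (∑' m, ‖a m‖ ^ 2)
            + (Complex.normSq w - 1) * ((∑' m, ‖c m‖ ^ 2) - ∑' m, ‖d m‖ ^ 2) := by
          rw [Summable.tsum_add Sa (((Sc.sub Sd)).mul_left _), tsum_mul_left, Summable.tsum_sub Sc Sd]
      _ = (∑' m, ‖a m‖ ^ 2) := by rw [hdc_tsum]; ring
  -- pointwise evaluation
  have hval : ∀ lam : ℂ, ‖lam‖ < 1 →
      HasSum (fun m => g m * lam ^ m)
        ((w - lam) / (1 - (starRingEnd ℂ) w * lam) * f lam) := by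
    intro lam hlam
    have hden : 1 - (starRingEnd ℂ) w * lam ≠ 0 := blaschke_den_ne w lam hw hlam
    have hwl : ‖(starRingEnd ℂ) w * lam‖ < 1 := by
      rw [norm_mul]
      have h1 : ‖(starRingEnd ℂ) w‖ = ‖w‖ := by
        simp
      have h2 : ‖lam‖ = ‖lam‖ := rfl
      rw [h1, h2]
      nlinarith [norm_nonneg w, norm_nonneg lam]
    have Na : Summable fun m => ‖a m * lam ^ m‖ := by
      apply Summable.of_nonneg_of_le (fun m => norm_nonneg _) (fun m => ?_)
        ((summable_geometric_of_lt_one (by positivity)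
          (by nlinarith [norm_nonneg lam] : r * ‖lam‖ < 1)).mul_left C)
      rw [norm_mul, norm_pow]
      calc ‖a m‖ * ‖lam‖ ^ m ≤ (C * r ^ m) * ‖lam‖ ^ m := by
            apply mul_le_mul (ha m) le_rfl (pow_nonneg (norm_nonneg _) _) (by positivity)
        _ = C * (r * ‖lam‖) ^ m := by rw [mul_pow]; ring
    have Nv : Summable fun i => ‖((starRingEnd ℂ) w * lam) ^ i‖ := by
      simp only [norm_pow]
      exact summable_geometric_of_lt_one (norm_nonneg _) hwl
    have Hcauchy := hasSum_sum_range_mul_of_summable_norm Na Nv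
    have hterm : ∀ n, (∑ k ∈ Finset.range (n + 1),
        (a k * lam ^ k) * ((starRingEnd ℂ) w * lam) ^ (n - k)) = c n * lam ^ n := by
      intro n
      rw [hcdef]
      simp only []
      rw [Finset.sum_mul]
      apply Finset.sum_congr rfl
      intro k hk
      have hk' : k ≤ n := Nat.lt_succ_iff.mp (Finset.mem_range.mp hk)
      rw [mul_pow]
      have : lam ^ k * lam ^ (n - k) = lam ^ n := by
        rw [← pow_add]
        congr 1
        omega
      calc a k * lam ^ k * ((starRingEnd ℂ) w ^ (n - k) * lam ^ (n - k))
          = a k * (starRingEnd ℂ) w ^ (n - k) * (lam ^ k * lam ^ (n - k)) := by ring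
        _ = a k * (starRingEnd ℂ) w ^ (n - k) * lam ^ n := by rw [this]
    have hsum1 : (∑' m, a m * lam ^ m) = f lam := (hf lam hlam).tsum_eq
    have hsum2 : (∑' i : ℕ, ((starRingEnd ℂ) w * lam) ^ i) = (1 - (starRingEnd ℂ) w * lam)⁻¹ :=
      tsum_geometric_of_norm_lt_one hwl
    have Hc : HasSum (fun n => c n * lam ^ n) (f lam * (1 - (starRingEnd ℂ) w * lam)⁻¹) := by
      have := Hcauchy
      rw [hsum1, hsum2] at this
      exact (funext hterm ▸ this)
    have Hd : HasSum (fun n => d n * lam ^ n)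
        (lam * (f lam * (1 - (starRingEnd ℂ) w * lam)⁻¹)) := by
      have H2 := Hc.mul_left lam
      have hfun : (fun n => d (n + 1) * lam ^ (n + 1))
          = fun n => lam * (c n * lam ^ n) := by
        funext n
        rw [hdsucc, pow_succ]
        ring
      rw [← hfun] at H2
      have H3 := (hasSum_nat_add_iff (f := fun n => d n * lam ^ n) 1).mp H2
      simpa [hd0] using H3
    have Hg := (Hc.mul_left w).sub Hd
    have hfun2 : (fun n => g n * lam ^ n)
        = fun n => w * (c n * lam ^ n) - d n * lam ^ n := by
      funext n
      rw [hgdef]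
      ring
    have hval2 : w * (f lam * (1 - (starRingEnd ℂ) w * lam)⁻¹)
        - lam * (f lam * (1 - (starRingEnd ℂ) w * lam)⁻¹)
        = (w - lam) / (1 - (starRingEnd ℂ) w * lam) * f lam := by
      field_simp
    rw [hfun2, ← hval2]
    exact Hg
  exact ⟨g, Cc + Cc / r', r', by positivity, hr'pos.le, hr'1, hg, hmass, hval⟩

lemma summable_sq_of_geom {u : ℕ → ℂ} {C r : ℝ} (hr0 : 0 ≤ r) (hr1 : r < 1)
    (hu : ∀ m, ‖u m‖ ≤ C * r ^ m) :
    Summable (fun m => ‖u m‖ ^ 2) := by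
  have hsq1 : (0:ℝ) ≤ r ^ 2 := by positivity
  have hsq2 : r ^ 2 < 1 := by nlinarith
  apply Summable.of_nonneg_of_le (fun m => by positivity)
    (fun m => ?_) ((summable_geometric_of_lt_one hsq1 hsq2).mul_left (C ^ 2))
  calc ‖u m‖ ^ 2 ≤ (C * r ^ m) ^ 2 :=
        pow_le_pow_left₀ (norm_nonneg _) (hu m) 2
    _ = C ^ 2 * (r ^ 2) ^ m := by ring

lemma blaschke_exists (z : ℕ → ℂ) (hz : ∀ n, ‖z n‖ < 1) (N : ℕ) :
    ∃ (a : ℕ → ℂ) (C r : ℝ), 0 < C ∧ 0 ≤ r ∧ r < 1 ∧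
      (∀ m, ‖a m‖ ≤ C * r ^ m) ∧
      (∑' m, ‖a m‖ ^ 2) = 1 ∧
      (∀ lam : ℂ, ‖lam‖ < 1 →
        HasSum (fun m => a m * lam ^ m)
          (∏ k ∈ Finset.range N, ((z k - lam) / (1 - (starRingEnd ℂ) (z k) * lam)))) := by
  induction N with
  | zero =>
      refine ⟨fun m => if m = 0 then 1 else 0, 1, 1/2, one_pos, by norm_num, by norm_num,
        ?_, ?_, ?_⟩
      · intro m
        cases m with
        | zero => simp
        | succ k =>
            simp only [Nat.succ_ne_zero, if_false, norm_zero]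
            positivity
      · rw [tsum_eq_single 0 (fun b hb => by simp [hb])]
        simp
      · intro lam hlam
        rw [Finset.prod_range_zero]
        have hfun : (fun m : ℕ => (if m = 0 then (1:ℂ) else 0) * lam ^ m)
            = fun m : ℕ => if m = 0 then (1:ℂ) else 0 := by
          funext m
          cases m with
          | zero => simp
          | succ k => simp
        rw [hfun]
        exact hasSum_ite_eq 0 1
  | succ N ih =>
      obtain ⟨a, C, r, hC, hr0, hr1, ha, hmass, hval⟩ := ih
      obtain ⟨g, C', r', h1, h2, h3, h4, h5, h6⟩ :=
        blaschke_step (z N) (hz N) a C r hC hr0 hr1 ha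
          (fun lam => ∏ k ∈ Finset.range N, ((z k - lam) / (1 - (starRingEnd ℂ) (z k) * lam)))
          hval
      refine ⟨g, C', r', h1, h2, h3, h4, by rw [h5, hmass], ?_⟩
      intro lam hlam
      have h7 := h6 lam hlam
      rw [Finset.prod_range_succ, mul_comm]
      exact h7


/-- If `inf βₙ = δ > 0`, the weighted Hardy space `H_β` has no frame of normalized
reproducing kernels. Here `H_β` is modeled by Taylor coefficients: for `f = Σ aₘ zᵐ`
one has `‖f‖²_β = Σ |aₘ|² βₘ`, `⟨f, K_λ⟩ = f(λ) = Σ aₘ λᵐ` and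
`‖K_λ‖²_β = Σ |λ|^{2m}/βₘ`, so the frame condition reads
`A‖f‖²_β ≤ Σₙ |f(zₙ)|²/‖K_{zₙ}‖²_β ≤ B‖f‖²_β`. -/
theorem no_frame_of_normalized_kernels
    (β : ℕ → ℝ) (hβ : ∀ n, 0 < β n)
    (hls1 : Filter.limsup (fun n : ℕ => (1 / β n) ^ ((n:ℝ)⁻¹)) Filter.atTop ≤ 1)
    (hls2 : Filter.limsup (fun n : ℕ => (β n) ^ ((n:ℝ)⁻¹)) Filter.atTop ≤ 1)
    (δ : ℝ) (hδ : 0 < δ) (hδβ : ∀ n, δ ≤ β n) :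
    ¬ ∃ (z : ℕ → ℂ) (A B : ℝ), (∀ n, ‖z n‖ < 1) ∧ 0 < A ∧ 0 < B ∧
      ∀ a : ℕ → ℂ, Summable (fun m => ‖a m‖ ^ 2 * β m) →
        A * (∑' m : ℕ, ‖a m‖ ^ 2 * β m) ≤
            (∑' n : ℕ, ‖∑' m : ℕ, a m * (z n) ^ m‖ ^ 2 /
              (∑' m : ℕ, ‖z n‖ ^ (2 * m) / β m)) ∧
          (∑' n : ℕ, ‖∑' m : ℕ, a m * (z n) ^ m‖ ^ 2 /
              (∑' m : ℕ, ‖z n‖ ^ (2 * m) / β m)) ≤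
            B * (∑' m : ℕ, ‖a m‖ ^ 2 * β m) := by
  rintro ⟨z, A, B, hz, hA, hB, hframe⟩
  set K : ℕ → ℝ := fun n => ∑' m : ℕ, ‖z n‖ ^ (2 * m) / β m with hKdef
  have hKpos : ∀ n, 0 < K n := by
    intro n
    have hKsum : Summable (fun m : ℕ => ‖z n‖ ^ (2 * m) / β m) := by
      apply Summable.of_nonneg_of_le
        (fun m => div_nonneg (pow_nonneg (norm_nonneg _) _) (hβ m).le)
        (fun m => ?_)
        (((summable_geometric_of_lt_one (pow_nonneg (norm_nonneg _) 2)
          (by nlinarith [norm_nonneg (z n), hz n] :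
            ‖z n‖ ^ 2 < 1)).mul_right δ⁻¹))
      rw [pow_mul, div_eq_mul_inv]
      apply mul_le_mul_of_nonneg_left _ (pow_nonneg (pow_nonneg (norm_nonneg _) 2) m)
      exact inv_anti₀ hδ (hδβ m)
    have h0 : (1 : ℝ) / β 0 ≤ K n := by
      have := Summable.le_tsum hKsum 0
        (fun j _ => div_nonneg (pow_nonneg (norm_nonneg _) _) (hβ j).le)
      simpa using this
    have : (0:ℝ) < 1 / β 0 := div_pos one_pos (hβ 0)
    linarith
  -- monomial tests
  have mono : ∀ M : ℕ,
      A * β M ≤ (∑' n, ‖z n‖ ^ (2 * M) / K n) ∧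
      (∑' n, ‖z n‖ ^ (2 * M) / K n) ≤ B * β M := by
    intro M
    set a : ℕ → ℂ := fun m => if m = M then 1 else 0 with hadef
    have hsummable : Summable (fun m => ‖a m‖ ^ 2 * β m) := by
      apply summable_of_ne_finset_zero (s := {M})
      intro m hm
      have : m ≠ M := by simpa using hm
      simp [hadef, this]
    have h1 : (∑' m, ‖a m‖ ^ 2 * β m) = β M := by
      rw [tsum_eq_single M (fun b hb => by simp [hadef, hb])]
      simp [hadef]
    have h2 : ∀ n, (∑' m : ℕ, a m * (z n) ^ m) = (z n) ^ M := by
      intro n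
      rw [tsum_eq_single M (fun b hb => by simp [hadef, hb])]
      simp [hadef]
    have := hframe a hsummable
    rw [h1] at this
    have h4 : (∑' n, ‖∑' m : ℕ, a m * (z n) ^ m‖ ^ 2 / K n)
        = ∑' n, ‖z n‖ ^ (2 * M) / K n := by
      apply tsum_congr
      intro n
      rw [h2 n, norm_pow, ← pow_mul, mul_comm M 2]
    rw [h4] at this
    exact this
  -- the M = 0 case : summability of 1 / K n
  have hone : ∀ n, ‖z n‖ ^ (2 * 0) / K n = 1 / K n := by
    intro n; norm_num
  have hU0 : A * β 0 ≤ ∑' n, 1 / K n := by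
    have := (mono 0).1
    rwa [tsum_congr hone] at this
  have hU1 : (∑' n, 1 / K n) ≤ B * β 0 := by
    have := (mono 0).2
    rwa [tsum_congr hone] at this
  have hUsummable : Summable (fun n => 1 / K n) := by
    by_contra h
    rw [tsum_eq_zero_of_not_summable h] at hU0
    nlinarith [hβ 0]
  -- tail of the series tends to 0
  have htail : Tendsto (fun N => ∑' k, 1 / K (k + N)) atTop (nhds 0) :=
    tendsto_sum_nat_add (fun n => 1 / K n)
  obtain ⟨N, hN⟩ := (htail.eventually (gt_mem_nhds (mul_pos hA hδ))).exists
  -- the finite Blaschke product with zeros z 0, ..., z (N-1)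
  obtain ⟨a, C, r, hC, hr0, hr1, ha, hmass, hval⟩ := blaschke_exists z hz N
  have Sa : Summable (fun m => ‖a m‖ ^ 2) := summable_sq_of_geom hr0 hr1 ha
  -- β is bounded by Γ
  set Γ : ℝ := B * β 0 / A with hΓdef
  have hΓpos : 0 < Γ := div_pos (mul_pos hB (hβ 0)) hA
  have hβΓ : ∀ M, β M ≤ Γ := by
    intro M
    have hsum_le : (∑' n, ‖z n‖ ^ (2 * M) / K n) ≤ ∑' n, 1 / K n := by
      have hterm : ∀ n, ‖z n‖ ^ (2 * M) / K n ≤ 1 / K n := by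
        intro n
        rw [div_le_div_iff₀ (hKpos n) (hKpos n)]
        have h5 : ‖z n‖ ^ (2 * M) ≤ 1 :=
          pow_le_one₀ (norm_nonneg _) (hz n).le
        nlinarith [hKpos n]
      apply Summable.tsum_le_tsum hterm ?_ hUsummable
      apply Summable.of_nonneg_of_le
        (fun n => div_nonneg (pow_nonneg (norm_nonneg _) _) (hKpos n).le)
        hterm hUsummable
    have := ((mono M).1.trans hsum_le).trans hU1
    rw [hΓdef, le_div_iff₀ hA]
    linarith
  -- the Blaschke coefficients give an element of H_β
  have hsummable : Summable (fun m => ‖a m‖ ^ 2 * β m) := by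
    apply Summable.of_nonneg_of_le
      (fun m => mul_nonneg (pow_nonneg (norm_nonneg _) _) (hβ m).le)
      (fun m => ?_) (Sa.mul_right Γ)
    exact mul_le_mul_of_nonneg_left (hβΓ m) (pow_nonneg (norm_nonneg _) _)
  have hlow : δ ≤ ∑' m, ‖a m‖ ^ 2 * β m := by
    have h6 : (∑' m, ‖a m‖ ^ 2 * δ) ≤ ∑' m, ‖a m‖ ^ 2 * β m := by
      apply Summable.tsum_le_tsum (fun m => ?_) (Sa.mul_right δ) hsummable
      exact mul_le_mul_of_nonneg_left (hδβ m) (pow_nonneg (norm_nonneg _) _)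
    rwa [tsum_mul_right, hmass, one_mul] at h6
  -- value of the Blaschke product at z n
  set Bl : ℕ → ℂ := fun n =>
    ∏ k ∈ Finset.range N, ((z k - z n) / (1 - (starRingEnd ℂ) (z k) * z n)) with hBldef
  have hBval : ∀ n, (∑' m : ℕ, a m * (z n) ^ m) = Bl n := fun n =>
    (hval (z n) (hz n)).tsum_eq
  have hBle : ∀ n, ‖Bl n‖ ≤ 1 := by
    intro n
    rw [hBldef]
    simp only [norm_prod]
    apply Finset.prod_le_one (fun k _ => norm_nonneg _)
    intro k _
    rw [norm_div]
    have hden : 1 - (starRingEnd ℂ) (z k) * z n ≠ 0 := blaschke_den_ne _ _ (hz k) (hz n)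
    have hdenpos : 0 < ‖1 - (starRingEnd ℂ) (z k) * z n‖ :=
      norm_pos_iff.mpr hden
    rw [div_le_one hdenpos]
    exact abs_blaschke_le _ _ (hz k) (hz n)
  have hBzero : ∀ n < N, Bl n = 0 := by
    intro n hn
    rw [hBldef]
    apply Finset.prod_eq_zero (Finset.mem_range.mpr hn)
    rw [sub_self, zero_div]
  -- apply the frame inequality to the Blaschke element
  have hlo := (hframe a hsummable).1
  have h7 : (∑' n, ‖∑' m : ℕ, a m * (z n) ^ m‖ ^ 2 / K n)
      = ∑' n, ‖Bl n‖ ^ 2 / K n := by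
    apply tsum_congr
    intro n
    rw [hBval n]
  rw [h7] at hlo
  -- compare with the tail
  set v : ℕ → ℝ := fun n => if n < N then 0 else 1 / K n with hvdef
  have hvsummable : Summable v := by
    apply Summable.of_nonneg_of_le (fun n => ?_) (fun n => ?_) hUsummable
    · rw [hvdef]; dsimp only
      split
      · exact le_rfl
      · exact (div_pos one_pos (hKpos n)).le
    · rw [hvdef]; dsimp only
      split
      · exact (div_pos one_pos (hKpos n)).le
      · exact le_rfl
  have htv : ∀ n, ‖Bl n‖ ^ 2 / K n ≤ v n := by
    intro n
    rw [hvdef]; dsimp only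
    split
    · next h =>
        rw [hBzero n h]
        simp
    · next h =>
        rw [div_le_div_iff₀ (hKpos n) (hKpos n)]
        have h5 : ‖Bl n‖ ^ 2 ≤ 1 := by
          have := hBle n
          nlinarith [norm_nonneg (Bl n)]
        nlinarith [hKpos n]
  have hTsummable : Summable (fun n => ‖Bl n‖ ^ 2 / K n) :=
    Summable.of_nonneg_of_le
      (fun n => div_nonneg (pow_nonneg (norm_nonneg _) _) (hKpos n).le)
      htv hvsummable
  have hTle : (∑' n, ‖Bl n‖ ^ 2 / K n) ≤ ∑' n, v n :=
    Summable.tsum_le_tsum htv hTsummable hvsummable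
  have hvtail : (∑' n, v n) = ∑' k, 1 / K (k + N) := by
    have h8 := Summable.sum_add_tsum_nat_add (f := v) N hvsummable
    have h9 : (∑ i ∈ Finset.range N, v i) = 0 := by
      apply Finset.sum_eq_zero
      intro i hi
      rw [hvdef]
      simp [Finset.mem_range.mp hi]
    have h10 : (∑' k, v (k + N)) = ∑' k, 1 / K (k + N) := by
      apply tsum_congr
      intro k
      rw [hvdef]
      simp
    rw [← h8, h9, zero_add, h10]
  have hfinal : A * δ ≤ A * ∑' m, ‖a m‖ ^ 2 * β m :=
    mul_le_mul_of_nonneg_left hlow hA.le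
  have := hfinal.trans (hlo.trans (hTle.trans_eq hvtail))
  linarith
end

section
/- Let X be a Banach space, f ∈ X, and suppose there exist γ ∈ (0,1), B > 0, and for every g ∈ X an approximation operator producing a finite linear combination S(g) of vectors from a fixed countable family {xₙ} with ‖g - S(g)‖ ≤ γ‖g‖, and such that all partial sums of S(g) (in a fixed order) have norm at most B‖g‖. Then f admits a series representation f = Σ cₙ xₙ converging in norm (with the fixed ordering), i.e., iterating the approximation scheme yields a representing series. -/
open Filter

/-- Abstract iteration scheme: if every `g` in a Banach space can be approximated, within any
block of indices starting at any prescribed position, by a finite linear combination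
`S(g) = Σ_{i∈[N,m)} cᵢ xᵢ` of the fixed family `{xₙ}` with `‖g - S(g)‖ ≤ γ‖g‖` (`γ < 1`),
all of whose intermediate partial sums are bounded by `B‖g‖`, then every `f` is the sum of a
norm-convergent series `Σ cₙ xₙ` (in the fixed order of the indices). -/
theorem abstract_iteration_representing
    (X : Type*) [NormedAddCommGroup X] [NormedSpace ℂ X]
    (x : ℕ → X) (γ B : ℝ) (hγ0 : 0 < γ) (hγ1 : γ < 1) (hB : 0 < B)
    (hS : ∀ (g : X) (N : ℕ), ∃ (m : ℕ) (c : ℕ → ℂ), N ≤ m ∧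
      ‖g - ∑ i ∈ Finset.Ico N m, c i • x i‖ ≤ γ * ‖g‖ ∧
      ∀ j, N ≤ j → j ≤ m → ‖∑ i ∈ Finset.Ico N j, c i • x i‖ ≤ B * ‖g‖)
    (f : X) :
    ∃ c : ℕ → ℂ,
      Filter.Tendsto (fun N => ∑ i ∈ Finset.range N, c i • x i) Filter.atTop (nhds f) := by
  classical
  -- Strengthen `hS` so that the block end is strictly larger than the start.
  have hS' : ∀ (g : X) (N : ℕ), ∃ (m : ℕ) (c : ℕ → ℂ), N < m ∧
      ‖g - ∑ i ∈ Finset.Ico N m, c i • x i‖ ≤ γ * ‖g‖ ∧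
      ∀ j, N ≤ j → j ≤ m → ‖∑ i ∈ Finset.Ico N j, c i • x i‖ ≤ B * ‖g‖ := by
    intro g N
    obtain ⟨m, c, hNm, h1, h2⟩ := hS g N
    have key : ∑ i ∈ Finset.Ico N (m + 1), (if i < m then c i else 0) • x i
        = ∑ i ∈ Finset.Ico N m, c i • x i := by
      rw [Finset.sum_Ico_succ_top (by omega)]
      rw [if_neg (lt_irrefl m), zero_smul, add_zero]
      exact Finset.sum_congr rfl fun i hi => by
        rw [if_pos (Finset.mem_Ico.mp hi).2]
    refine ⟨m + 1, fun i => if i < m then c i else 0, by omega, by rw [key]; exact h1, ?_⟩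
    intro j hNj hjm
    rcases le_or_gt j m with hj | hj
    · have : ∑ i ∈ Finset.Ico N j, (if i < m then c i else 0) • x i
          = ∑ i ∈ Finset.Ico N j, c i • x i :=
        Finset.sum_congr rfl fun i hi => by
          rw [if_pos (lt_of_lt_of_le (Finset.mem_Ico.mp hi).2 hj)]
      rw [this]; exact h2 j hNj hj
    · have hj' : j = m + 1 := by omega
      subst hj'
      rw [key]; exact h2 m hNm le_rfl
  choose m co hlt happ hpart using hS'
  -- Iterate: `st k = (g k, N k)` is the state after `k` steps.
  set st : ℕ → X × ℕ := fun k => Nat.rec (f, 0)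
    (fun _ p => (p.1 - ∑ i ∈ Finset.Ico p.2 (m p.1 p.2), co p.1 p.2 i • x i, m p.1 p.2)) k
    with hst
  set g : ℕ → X := fun k => (st k).1 with hgdef
  set N : ℕ → ℕ := fun k => (st k).2 with hNdef
  have hg0 : g 0 = f := rfl
  have hN0 : N 0 = 0 := rfl
  have hNsucc : ∀ k, N (k + 1) = m (g k) (N k) := fun k => rfl
  have hgsucc : ∀ k, g (k + 1)
      = g k - ∑ i ∈ Finset.Ico (N k) (N (k + 1)), co (g k) (N k) i • x i := fun k => rfl
  have hNmono : StrictMono N :=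
    strictMono_nat_of_lt_succ fun k => by rw [hNsucc]; exact hlt _ _
  have hNk : ∀ k, k ≤ N k := fun k => hNmono.le_apply
  have hgnorm : ∀ k, ‖g k‖ ≤ γ ^ k * ‖f‖ := by
    intro k
    induction k with
    | zero => simp [hg0]
    | succ k ih =>
      have h1 : ‖g (k + 1)‖ ≤ γ * ‖g k‖ := by
        rw [hgsucc, hNsucc]; exact happ _ _
      calc ‖g (k + 1)‖ ≤ γ * ‖g k‖ := h1
        _ ≤ γ * (γ ^ k * ‖f‖) := mul_le_mul_of_nonneg_left ih hγ0.le
        _ = γ ^ (k + 1) * ‖f‖ := by ring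
  -- The level function and the global coefficients.
  set L : ℕ → ℕ := fun n => Nat.findGreatest (fun k => N k ≤ n) n with hLdef
  refine ⟨fun i => co (g (L i)) (N (L i)) i, ?_⟩
  have hLle : ∀ n, N (L n) ≤ n := fun n =>
    Nat.findGreatest_spec (P := fun k => N k ≤ n) (m := 0) (Nat.zero_le n)
      (by show N 0 ≤ n; rw [hN0]; exact Nat.zero_le n)
  have hLlt : ∀ n, n < N (L n + 1) := by
    intro n
    rcases le_or_gt (L n + 1) n with h | h
    · by_contra hc
      exact Nat.findGreatest_is_greatest (lt_add_one _) h (not_lt.mp hc)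
    · exact lt_of_lt_of_le h (hNk _)
  have hLeq : ∀ k i, N k ≤ i → i < N (k + 1) → L i = k := by
    intro k i h1 h2
    have hk : k ≤ L i := Nat.le_findGreatest (le_trans (hNk k) h1) h1
    by_contra hne
    have hk1 : k + 1 ≤ L i := lt_of_le_of_ne hk (Ne.symm hne)
    have h3 : N (k + 1) ≤ N (L i) := hNmono.monotone hk1
    have h4 := hLle i
    omega
  -- Cumulative sums at block boundaries.
  have hcum : ∀ k, ∑ i ∈ Finset.range (N k), co (g (L i)) (N (L i)) i • x i = f - g k := by
    intro k
    induction k with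
    | zero => simp [hN0, hg0]
    | succ k ih =>
      have split : (∑ i ∈ Finset.range (N k), co (g (L i)) (N (L i)) i • x i)
            + ∑ i ∈ Finset.Ico (N k) (N (k + 1)), co (g (L i)) (N (L i)) i • x i
          = ∑ i ∈ Finset.range (N (k + 1)), co (g (L i)) (N (L i)) i • x i :=
        Finset.sum_range_add_sum_Ico _ (hNmono (lt_add_one k)).le
      rw [← split, ih]
      have heq : ∑ i ∈ Finset.Ico (N k) (N (k + 1)), co (g (L i)) (N (L i)) i • x i
          = ∑ i ∈ Finset.Ico (N k) (N (k + 1)), co (g k) (N k) i • x i := by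
        refine Finset.sum_congr rfl fun i hi => ?_
        obtain ⟨ha, hb⟩ := Finset.mem_Ico.mp hi
        show co (g (L i)) (N (L i)) i • x i = co (g k) (N k) i • x i
        rw [hLeq k i ha hb]
      rw [heq, hgsucc k]
      abel
  -- Bound for an arbitrary partial sum.
  have hbound : ∀ n, ‖(∑ i ∈ Finset.range n, co (g (L i)) (N (L i)) i • x i) - f‖
      ≤ (1 + B) * (γ ^ (L n) * ‖f‖) := by
    intro n
    have h1 : N (L n) ≤ n := hLle n
    have h2 : n < N (L n + 1) := hLlt n
    have hsplit : ∑ i ∈ Finset.range n, co (g (L i)) (N (L i)) i • x i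
        = (f - g (L n)) + ∑ i ∈ Finset.Ico (N (L n)) n, co (g (L n)) (N (L n)) i • x i := by
      have split : (∑ i ∈ Finset.range (N (L n)), co (g (L i)) (N (L i)) i • x i)
            + ∑ i ∈ Finset.Ico (N (L n)) n, co (g (L i)) (N (L i)) i • x i
          = ∑ i ∈ Finset.range n, co (g (L i)) (N (L i)) i • x i :=
        Finset.sum_range_add_sum_Ico _ h1
      rw [← split, hcum (L n)]
      congr 1
      refine Finset.sum_congr rfl fun i hi => ?_
      obtain ⟨ha, hb⟩ := Finset.mem_Ico.mp hi
      show co (g (L i)) (N (L i)) i • x i = co (g (L n)) (N (L n)) i • x i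
      rw [hLeq (L n) i ha (lt_trans hb h2)]
    rw [hsplit]
    have hps := hpart (g (L n)) (N (L n)) n h1 h2.le
    have e1 : (f - g (L n)) + (∑ i ∈ Finset.Ico (N (L n)) n, co (g (L n)) (N (L n)) i • x i) - f
        = (∑ i ∈ Finset.Ico (N (L n)) n, co (g (L n)) (N (L n)) i • x i) - g (L n) := by abel
    rw [e1]
    calc ‖(∑ i ∈ Finset.Ico (N (L n)) n, co (g (L n)) (N (L n)) i • x i) - g (L n)‖
        ≤ ‖∑ i ∈ Finset.Ico (N (L n)) n, co (g (L n)) (N (L n)) i • x i‖ + ‖g (L n)‖ :=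
          norm_sub_le _ _
      _ ≤ B * ‖g (L n)‖ + ‖g (L n)‖ := add_le_add hps le_rfl
      _ = (1 + B) * ‖g (L n)‖ := by ring
      _ ≤ (1 + B) * (γ ^ (L n) * ‖f‖) :=
          mul_le_mul_of_nonneg_left (hgnorm (L n)) (by linarith)
  -- `L` tends to infinity.
  have hLtop : Tendsto L atTop atTop := by
    refine tendsto_atTop_atTop.mpr fun b => ⟨N b, fun n hn => ?_⟩
    exact Nat.le_findGreatest (le_trans (hNk b) hn) hn
  have hγtend : Tendsto (fun n => (1 + B) * (γ ^ (L n) * ‖f‖)) atTop (nhds 0) := by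
    have h1 : Tendsto (fun k : ℕ => γ ^ k) atTop (nhds 0) :=
      tendsto_pow_atTop_nhds_zero_of_lt_one hγ0.le hγ1
    have h2 := ((h1.comp hLtop).mul_const ‖f‖).const_mul (1 + B)
    simpa using h2
  rw [tendsto_iff_norm_sub_tendsto_zero]
  exact squeeze_zero (fun n => norm_nonneg _) hbound hγtend
end
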